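/- For |q|<1, ω(q) = ∑_{n≥0} q^n/(q;q^2)_{n+1}, where ω(q) = ∑_{n≥0} q^{2n^2+2n}/(q;q^2)_{n+1}^2. -/

import Mathlib

open scoped BigOperators

noncomputable def qPoch (a q : ℂ) (n : ℕ) : ℂ := ∏ j ∈ Finset.range n, (1 - a * q ^ j)

noncomputable def qPochInf (a q : ℂ) : ℂ := ∏' j : ℕ, (1 - a * q ^ j)

lemma qPoch_succ (a q : ℂ) (n : ℕ) :
    qPoch a q (n+1) = qPoch a q n * (1 - a * q ^ n) := Finset.prod_range_succ _ _

lemma qPoch_one (a q : ℂ) : qPoch a q 1 = 1 - a := by simp [qPoch]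

lemma qPoch_shift (a q : ℂ) (n : ℕ) :
    qPoch a q (n+1) = (1 - a) * qPoch (a*q) q n := by
  rw [qPoch, Finset.prod_range_succ']
  simp only [pow_zero, mul_one]
  rw [mul_comm]
  congr 1
  apply Finset.prod_congr rfl
  intro j _
  rw [pow_succ]
  ring

lemma qPoch_ne_zero (a q : ℂ) (n : ℕ) (h : ∀ j : ℕ, 1 - a * q ^ j ≠ 0) :
    qPoch a q n ≠ 0 := by
  rw [qPoch, Finset.prod_ne_zero_iff]
  exact fun j _ => h j

noncomputable def gb (Q : ℂ) : ℕ → ℕ → ℂ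
  | _, 0 => 1
  | 0, _+1 => 0
  | N+1, k+1 => gb Q N k + Q ^ (k+1) * gb Q N (k+1)

lemma gb_zero (Q : ℂ) (N : ℕ) : gb Q N 0 = 1 := by cases N <;> rfl

lemma gb_succ_succ (Q : ℂ) (N k : ℕ) :
    gb Q (N+1) (k+1) = gb Q N k + Q ^ (k+1) * gb Q N (k+1) := rfl

lemma gb_zero_succ (Q : ℂ) (k : ℕ) : gb Q 0 (k+1) = 0 := rfl

lemma gb_eq_zero (Q : ℂ) : ∀ N k, N < k → gb Q N k = 0 := by
  intro N
  induction N with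
  | zero =>
    intro k hk
    match k, hk with
    | k+1, _ => rfl
  | succ N ih =>
    intro k hk
    match k, hk with
    | k+1, hk =>
      rw [gb_succ_succ, ih k (by omega), ih (k+1) (by omega)]
      ring

lemma gb_pascal2 (Q : ℂ) : ∀ N k, gb Q (N+1) (k+1) = Q ^ (N - k) * gb Q N k + gb Q N (k+1) := by
  intro N
  induction N with
  | zero =>
    intro k
    match k with
    | 0 => simp [gb_succ_succ, gb_zero, gb_zero_succ]
    | k+1 => simp [gb_succ_succ, gb_zero_succ, gb_eq_zero Q 0 (k+1) (by omega)]
  | succ N ih =>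
    intro k
    match k with
    | 0 =>
      conv_lhs => rw [gb_succ_succ, ih 0]
      conv_rhs => rw [gb_succ_succ Q N 0]
      simp only [gb_zero, Nat.sub_zero]
      rw [pow_succ Q N]
      ring
    | j+1 =>
      by_cases h : j + 1 ≤ N
      · conv_lhs => rw [gb_succ_succ, ih j, ih (j+1)]
        conv_rhs => rw [gb_succ_succ Q N j, gb_succ_succ Q N (j+1)]
        have e1 : N + 1 - (j+1) = N - j := by omega
        have e3 : Q ^ (j+1+1) * Q ^ (N - (j+1)) = Q ^ (N + 1) := by
          rw [← pow_add]; congr 1; omega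
        have e4 : Q ^ (N - j) * Q ^ (j+1) = Q ^ (N + 1) := by
          rw [← pow_add]; congr 1; omega
        rw [e1]
        calc Q ^ (N - j) * gb Q N j + gb Q N (j + 1) +
              Q ^ (j + 1 + 1) * (Q ^ (N - (j + 1)) * gb Q N (j + 1) + gb Q N (j + 1 + 1))
            = Q ^ (N - j) * gb Q N j + gb Q N (j + 1) +
              (Q ^ (j+1+1) * Q ^ (N - (j+1))) * gb Q N (j + 1)
              + Q ^ (j+1+1) * gb Q N (j+1+1) := by ring
          _ = Q ^ (N - j) * gb Q N j + gb Q N (j + 1) +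
              (Q ^ (N - j) * Q ^ (j+1)) * gb Q N (j + 1)
              + Q ^ (j+1+1) * gb Q N (j+1+1) := by rw [e3, e4]
          _ = _ := by ring
      · conv_lhs => rw [gb_succ_succ, ih j, ih (j+1)]
        rcases Nat.lt_or_ge N j with hj | hj
        · rw [gb_eq_zero Q N j hj, gb_eq_zero Q N (j+1) (by omega),
            gb_eq_zero Q N (j+1+1) (by omega), gb_eq_zero Q (N+1) (j+1+1) (by omega),
            gb_eq_zero Q (N+1) (j+1) (by omega)]
          ring
        · have hjN : j = N := by omega
          subst hjN
          rw [gb_succ_succ Q j j, gb_succ_succ Q j (j+1),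
            gb_eq_zero Q j (j+1) (by omega), gb_eq_zero Q j (j+1+1) (by omega)]
          simp [Nat.sub_self]

lemma gb_norm_le (Q : ℂ) (hQ : ‖Q‖ < 1) : ∀ N k, ‖gb Q N k‖ ≤ (2 / (1 - ‖Q‖)) ^ k := by
  have h0 : (0:ℝ) ≤ ‖Q‖ := norm_nonneg _
  have h1 : (0:ℝ) < 1 - ‖Q‖ := by linarith
  intro N
  induction N with
  | zero =>
    intro k
    match k with
    | 0 => simp [gb_zero]
    | k+1 =>
      rw [gb_zero_succ]
      simp only [norm_zero]
      positivity
  | succ N ih =>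
    intro k
    match k with
    | 0 => simp [gb_zero]
    | k+1 =>
      rw [gb_succ_succ]
      have hd : (2 / (1 - ‖Q‖)) * (1-‖Q‖) = 2 := div_mul_cancel₀ _ h1.ne'
      have key : 1 + ‖Q‖ * (2 / (1 - ‖Q‖)) ≤ (2 / (1 - ‖Q‖)) := by nlinarith
      calc ‖gb Q N k + Q ^ (k+1) * gb Q N (k+1)‖
          ≤ ‖gb Q N k‖ + ‖Q‖^(k+1) * ‖gb Q N (k+1)‖ := by
            refine (norm_add_le _ _).trans ?_
            rw [norm_mul, norm_pow]
        _ ≤ (2 / (1 - ‖Q‖)) ^ k + ‖Q‖ * (2 / (1 - ‖Q‖)) ^ (k+1) := by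
            have hk1 : ‖Q‖^(k+1) ≤ ‖Q‖ := by
              calc ‖Q‖^(k+1) ≤ ‖Q‖^1 := pow_le_pow_of_le_one h0 hQ.le (by omega)
                _ = ‖Q‖ := pow_one _
            have h2 : ‖Q‖ ^ (k + 1) * ‖gb Q N (k+1)‖ ≤ ‖Q‖ * (2 / (1 - ‖Q‖)) ^ (k+1) :=
              mul_le_mul hk1 (ih (k+1)) (norm_nonneg _) h0
            linarith [ih k]
        _ ≤ (2 / (1 - ‖Q‖)) ^ (k+1) := by
            have hCp : (0:ℝ) ≤ (2 / (1 - ‖Q‖))^k := by positivity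
            calc (2/(1-‖Q‖))^k + ‖Q‖ * (2/(1-‖Q‖))^(k+1)
                = (2/(1-‖Q‖))^k * (1 + ‖Q‖ * (2/(1-‖Q‖))) := by ring
              _ ≤ (2/(1-‖Q‖))^k * (2/(1-‖Q‖)) := mul_le_mul_of_nonneg_left key hCp
              _ = (2/(1-‖Q‖))^(k+1) := by rw [pow_succ]
lemma fine_finite (Q : ℂ) : ∀ (N : ℕ) (β : ℂ), (∀ j : ℕ, 1 - β * Q ^ j ≠ 0) →
    ∑ n ∈ Finset.range (N+1), gb Q N n * Q^(n^2) * β^n / qPoch β Q (n+1)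
      = 1 / qPoch β Q (N+1) := by
  intro N
  induction N with
  | zero =>
    intro β hβ
    simp [gb_zero, qPoch_one]
  | succ N ih =>
    intro β hβ
    have hβQ : ∀ j : ℕ, 1 - (β*Q) * Q ^ j ≠ 0 := by
      intro j
      have e : 1 - β * Q^(j+1) = 1 - (β*Q) * Q^j := by rw [pow_succ]; ring
      exact e ▸ hβ (j+1)
    -- split the sum
    rw [Finset.sum_range_succ']
    have hsplit : ∀ k ∈ Finset.range (N+1),
        gb Q (N+1) (k+1) * Q^((k+1)^2) * β^(k+1) / qPoch β Q (k+1+1)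
        = gb Q N (k+1) * Q^((k+1)^2) * β^(k+1) / qPoch β Q (k+1+1)
          + (β * Q^(N+1) / (1-β)) *
            (gb Q N k * Q^(k^2) * (β*Q)^k / qPoch (β*Q) Q (k+1)) := by
      intro k hk
      have hkN : k ≤ N := by
        have := Finset.mem_range.mp hk; omega
      rw [gb_pascal2]
      have hsh : qPoch β Q (k+1+1) = (1-β) * qPoch (β*Q) Q (k+1) := qPoch_shift β Q (k+1)
      have h1β : (1:ℂ) - β ≠ 0 := by
        have := hβ 0; simpa using this
      have hne : qPoch (β*Q) Q (k+1) ≠ 0 := qPoch_ne_zero _ _ _ hβQ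
      rw [hsh]
      have hexp : Q ^ (N-k) * Q ^ ((k+1)^2) = Q^(N+1) * Q^(k^2) * Q^k := by
        rw [← pow_add, ← pow_add, ← pow_add]; congr 1
        have : (k+1)^2 = k^2 + 2*k + 1 := by ring
        omega
      field_simp
      calc (Q ^ (N - k) * gb Q N k + gb Q N (k + 1)) * Q ^ (k + 1) ^ 2 * β ^ (k + 1)
          = gb Q N k * (Q ^ (N-k) * Q ^ ((k+1)^2)) * β^(k+1)
            + gb Q N (k+1) * Q^((k+1)^2) * β^(k+1) := by ring
        _ = gb Q N k * (Q^(N+1) * Q^(k^2) * Q^k) * β^(k+1)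
            + gb Q N (k+1) * Q^((k+1)^2) * β^(k+1) := by rw [hexp]
        _ = _ := by rw [mul_pow]; ring
    rw [Finset.sum_congr rfl hsplit, Finset.sum_add_distrib]
    -- first piece: completes to the IH sum at β
    have hfirst : (∑ k ∈ Finset.range (N+1),
        gb Q N (k+1) * Q^((k+1)^2) * β^(k+1) / qPoch β Q (k+1+1))
        + gb Q (N+1) 0 * Q^(0^2) * β^0 / qPoch β Q (0+1)
        = 1 / qPoch β Q (N+1) := by
      have e0 : gb Q (N+1) 0 * Q^(0^2) * β^0 / qPoch β Q (0+1)
          = gb Q N 0 * Q^(0^2) * β^0 / qPoch β Q (0+1) := by rw [gb_zero, gb_zero]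
      rw [e0,
        ← Finset.sum_range_succ' (fun n => gb Q N n * Q^(n^2) * β^n / qPoch β Q (n+1)) (N+1),
        Finset.sum_range_succ, gb_eq_zero Q N (N+1) (by omega), ih β hβ]
      simp
    -- second piece: IH at β*Q
    have hsecond : (∑ k ∈ Finset.range (N+1),
        (β * Q^(N+1) / (1-β)) * (gb Q N k * Q^(k^2) * (β*Q)^k / qPoch (β*Q) Q (k+1)))
        = (β * Q^(N+1) / (1-β)) * (1 / qPoch (β*Q) Q (N+1)) := by
      rw [← Finset.mul_sum, ih (β*Q) hβQ]
    have hP2a : qPoch β Q (N+1+1) = qPoch β Q (N+1) * (1 - β * Q^(N+1)) := qPoch_succ _ _ _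
    have hP2b : qPoch β Q (N+1+1) = (1-β) * qPoch (β*Q) Q (N+1) := qPoch_shift _ _ _
    have hxy : (1-β) * qPoch (β*Q) Q (N+1) = qPoch β Q (N+1) * (1 - β * Q^(N+1)) := by
      rw [← hP2b, hP2a]
    have hPN1 : qPoch β Q (N+1) ≠ 0 := qPoch_ne_zero _ _ _ hβ
    have hc : 1 - β * Q^(N+1) ≠ 0 := hβ (N+1)
    have hsec2 : β * Q^(N+1) / (1-β) * (1 / qPoch (β*Q) Q (N+1))
        = β * Q^(N+1) / (qPoch β Q (N+1) * (1 - β * Q^(N+1))) := by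
      rw [div_mul_div_comm, mul_one, hxy]
    calc ∑ k ∈ Finset.range (N+1),
            gb Q N (k+1) * Q^((k+1)^2) * β^(k+1) / qPoch β Q (k+1+1)
          + ∑ k ∈ Finset.range (N+1),
            (β * Q^(N+1) / (1-β)) * (gb Q N k * Q^(k^2) * (β*Q)^k / qPoch (β*Q) Q (k+1))
          + gb Q (N+1) 0 * Q^(0^2) * β^0 / qPoch β Q (0+1)
        = ((∑ k ∈ Finset.range (N+1),
            gb Q N (k+1) * Q^((k+1)^2) * β^(k+1) / qPoch β Q (k+1+1))
          + gb Q (N+1) 0 * Q^(0^2) * β^0 / qPoch β Q (0+1))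
          + ∑ k ∈ Finset.range (N+1),
            (β * Q^(N+1) / (1-β)) * (gb Q N k * Q^(k^2) * (β*Q)^k / qPoch (β*Q) Q (k+1)) := by
          ring
      _ = 1 / qPoch β Q (N+1) + β * Q^(N+1) / (1-β) * (1 / qPoch (β*Q) Q (N+1)) := by
          rw [hfirst, hsecond]
      _ = 1 / qPoch β Q (N+1+1) := by
          rw [hsec2, hP2a]
          field_simp
          ring

section Analytic

variable {q : ℂ}

lemma hfac (hq : ‖q‖ < 1) : ∀ j : ℕ, 1 - q * (q^2) ^ j ≠ 0 := by
  intro j h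
  have hx : ‖q * (q^2)^j‖ ≤ ‖q‖ := by
    rw [norm_mul, norm_pow, norm_pow]
    calc ‖q‖ * (‖q‖^2)^j ≤ ‖q‖ * 1 := by
          apply mul_le_mul_of_nonneg_left _ (norm_nonneg q)
          calc (‖q‖^2)^j ≤ (‖q‖^2)^0 :=
                pow_le_pow_of_le_one (by positivity) (by nlinarith [norm_nonneg q]) (Nat.zero_le j)
            _ = 1 := pow_zero _
      _ = ‖q‖ := mul_one _
  have h1 : q * (q^2)^j = 1 := by linear_combination -h
  rw [h1, norm_one] at hx
  linarith

lemma qPoch_norm_lower (hq : ‖q‖ < 1) (n : ℕ) : (1 - ‖q‖)^n ≤ ‖qPoch q (q^2) n‖ := by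
  rw [qPoch, norm_prod]
  have e : (1 - ‖q‖)^n = ∏ _j ∈ Finset.range n, (1 - ‖q‖) := by
    rw [Finset.prod_const, Finset.card_range]
  rw [e]
  apply Finset.prod_le_prod
  · intro j _; linarith [hq, norm_nonneg q]
  · intro j _
    have hx : ‖q * (q^2)^j‖ ≤ ‖q‖ := by
      rw [norm_mul, norm_pow, norm_pow]
      calc ‖q‖ * (‖q‖^2)^j ≤ ‖q‖ * 1 := by
            apply mul_le_mul_of_nonneg_left _ (norm_nonneg q)
            calc (‖q‖^2)^j ≤ (‖q‖^2)^0 :=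
                  pow_le_pow_of_le_one (by positivity) (by nlinarith [norm_nonneg q]) (Nat.zero_le j)
              _ = 1 := pow_zero _
        _ = ‖q‖ := mul_one _
    calc 1 - ‖q‖ ≤ 1 - ‖q * (q^2)^j‖ := by linarith
      _ = ‖(1:ℂ)‖ - ‖q * (q^2)^j‖ := by rw [norm_one]
      _ ≤ ‖1 - q * (q^2)^j‖ := norm_sub_norm_le _ _

lemma qPoch_inv_norm_le (hq : ‖q‖ < 1) (n : ℕ) : ‖1 / qPoch q (q^2) n‖ ≤ ((1-‖q‖)⁻¹)^n := by
  have h1 : (0:ℝ) < 1 - ‖q‖ := by linarith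
  have h2 : (0:ℝ) < (1-‖q‖)^n := by positivity
  rw [norm_div, norm_one, inv_pow, div_eq_mul_inv, one_mul]
  exact inv_anti₀ h2 (qPoch_norm_lower hq n)

lemma gb_summable (hq : ‖q‖ < 1) (a b : ℕ) : Summable (fun m => gb (q^2) (m+a) b * q^m) := by
  have hQ : ‖q^2‖ < 1 := by rw [norm_pow]; nlinarith [norm_nonneg q]
  apply Summable.of_norm_bounded (g := fun m => (2/(1-‖q^2‖))^b * ‖q‖^m)
  · exact ((summable_geometric_of_lt_one (norm_nonneg q) hq).mul_left _)
  · intro m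
    rw [norm_mul, norm_pow]
    exact mul_le_mul_of_nonneg_right (gb_norm_le _ hQ _ _) (by positivity)

lemma gb_tsum (hq : ‖q‖ < 1) : ∀ n : ℕ, ∑' m : ℕ, gb (q^2) (m+n) n * q^m = 1 / qPoch q (q^2) (n+1) := by
  intro n
  induction n with
  | zero =>
    simp only [Nat.add_zero, gb_zero, one_mul]
    rw [tsum_geometric_of_norm_lt_one hq, qPoch_one, one_div]
  | succ n ih =>
    have Sf : Summable (fun m => gb (q^2) (m+(n+1)) (n+1) * q^m) := gb_summable hq _ _
    have Sa : Summable (fun m => gb (q^2) (m+n) n * q^m) := gb_summable hq _ _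
    have Sg : Summable (fun m => gb (q^2) (m+n) (n+1) * q^m) := gb_summable hq _ _
    have hterm : ∀ m : ℕ, gb (q^2) (m+(n+1)) (n+1) * q^m
        = gb (q^2) (m+n) n * q^m + (q^2)^(n+1) * (gb (q^2) (m+n) (n+1) * q^m) := by
      intro m
      show gb (q^2) ((m+n)+1) (n+1) * q^m = _
      rw [gb_succ_succ]
      ring
    have hg0 : gb (q^2) (0+n) (n+1) * q^0 = 0 := by
      rw [gb_eq_zero _ _ _ (by omega)]; ring
    have hgshift : ∀ m : ℕ, gb (q^2) ((m+1)+n) (n+1) * q^(m+1)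
        = q * (gb (q^2) (m+(n+1)) (n+1) * q^m) := by
      intro m
      have e : (m+1)+n = m+(n+1) := by omega
      rw [e, pow_succ]
      ring
    have hgsum : ∑' m : ℕ, gb (q^2) (m+n) (n+1) * q^m
        = q * ∑' m : ℕ, gb (q^2) (m+(n+1)) (n+1) * q^m := by
      rw [Summable.tsum_eq_zero_add Sg, hg0, zero_add]
      rw [← tsum_mul_left]
      exact tsum_congr hgshift
    have heq : ∑' m : ℕ, gb (q^2) (m+(n+1)) (n+1) * q^m
        = 1 / qPoch q (q^2) (n+1)
          + (q^2)^(n+1) * (q * ∑' m : ℕ, gb (q^2) (m+(n+1)) (n+1) * q^m) := by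
      calc ∑' m : ℕ, gb (q^2) (m+(n+1)) (n+1) * q^m
          = ∑' m : ℕ, (gb (q^2) (m+n) n * q^m + (q^2)^(n+1) * (gb (q^2) (m+n) (n+1) * q^m)) :=
            tsum_congr hterm
        _ = (∑' m : ℕ, gb (q^2) (m+n) n * q^m)
            + ∑' m : ℕ, (q^2)^(n+1) * (gb (q^2) (m+n) (n+1) * q^m) :=
            Summable.tsum_add Sa (Sg.mul_left _)
        _ = _ := by rw [ih, tsum_mul_left, hgsum]
    have hPn : qPoch q (q^2) (n+1) ≠ 0 := qPoch_ne_zero _ _ _ (hfac hq)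
    have hfc : 1 - q * (q^2)^(n+1) ≠ 0 := hfac hq (n+1)
    have hkey : (∑' m : ℕ, gb (q^2) (m+(n+1)) (n+1) * q^m) * (1 - q * (q^2)^(n+1))
        = 1 / qPoch q (q^2) (n+1) := by
      linear_combination heq
    rw [qPoch_succ, eq_div_iff (mul_ne_zero hPn hfc)]
    field_simp at hkey
    linear_combination hkey

end Analytic

theorem stmt_6 (q : ℂ) (hq : ‖q‖ < 1) :
    (∑' n : ℕ, q ^ (2 * n ^ 2 + 2 * n) / (qPoch q (q ^ 2) (n + 1)) ^ 2) =
      ∑' n : ℕ, q ^ n / qPoch q (q ^ 2) (n + 1) := by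
  have h0r : 0 ≤ ‖q‖ := norm_nonneg q
  have h1r : 0 < 1 - ‖q‖ := by linarith
  have hQ : ‖q^2‖ < 1 := by rw [norm_pow]; nlinarith
  have hC2pos : 0 < 2/(1-‖q^2‖) := by
    have : 0 < 1 - ‖q^2‖ := by linarith
    positivity
  set B : ℕ × ℕ → ℂ :=
    fun p => gb (q^2) p.1 p.2 * (q^2)^(p.2^2) * q^(p.1 + p.2) / qPoch q (q^2) (p.2+1) with hB
  set u : ℕ → ℝ := fun n => (2/(1-‖q^2‖))^n * ‖q‖^(2*n^2+n) * ((1-‖q‖)⁻¹)^(n+1) with hu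
  have hun : ∀ n, 0 ≤ u n := fun n => by simp only [hu]; positivity
  have hBu : ∀ p : ℕ × ℕ, ‖B p‖ ≤ ‖q‖^p.1 * u p.2 := by
    rintro ⟨N, n⟩
    have h1 : ‖gb (q^2) N n‖ ≤ (2/(1-‖q^2‖))^n := gb_norm_le _ hQ N n
    have h2 : ‖1/qPoch q (q^2) (n+1)‖ ≤ ((1-‖q‖)⁻¹)^(n+1) := qPoch_inv_norm_le hq (n+1)
    have heq : ‖B (N,n)‖ = ‖gb (q^2) N n‖ * ‖(q^2)^(n^2)‖ * ‖q^(N+n)‖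
        * ‖1/qPoch q (q^2) (n+1)‖ := by
      simp only [hB]
      rw [div_eq_mul_one_div, norm_mul, norm_mul, norm_mul]
    rw [heq]
    have h3 : ‖(q^2)^(n^2)‖ = ‖q‖^(2*n^2) := by
      rw [norm_pow, norm_pow, ← pow_mul]
    have h4 : ‖q^(N+n)‖ = ‖q‖^(N+n) := norm_pow _ _
    rw [h3, h4]
    calc ‖gb (q^2) N n‖ * ‖q‖^(2*n^2) * ‖q‖^(N+n) * ‖1/qPoch q (q^2) (n+1)‖
        ≤ (2/(1-‖q^2‖))^n * ‖q‖^(2*n^2) * ‖q‖^(N+n) * ((1-‖q‖)⁻¹)^(n+1) := by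
          gcongr <;> positivity
      _ = ‖q‖^N * u n := by
          simp only [hu]
          rw [pow_add ‖q‖ (2*n^2) n, pow_add ‖q‖ N n]
          ring
  have hgeo : Filter.Tendsto (fun n : ℕ => (2/(1-‖q^2‖) * (1-‖q‖)⁻¹) * ‖q‖^n)
      Filter.atTop (nhds 0) := by
    have := (tendsto_pow_atTop_nhds_zero_of_lt_one h0r hq).const_mul
      (2/(1-‖q^2‖) * (1-‖q‖)⁻¹)
    simpa using this
  have hev : ∀ᶠ n in Filter.atTop, ‖u (n+1)‖ ≤ (1/2) * ‖u n‖ := by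
    have hev0 : ∀ᶠ n in Filter.atTop, (2/(1-‖q^2‖) * (1-‖q‖)⁻¹) * ‖q‖^n < 1/2 :=
      hgeo.eventually (gt_mem_nhds (by norm_num))
    filter_upwards [hev0] with n hn
    have hue : u (n+1) = (2/(1-‖q^2‖) * (1-‖q‖)⁻¹ * ‖q‖^(4*n+3)) * u n := by
      simp only [hu]
      have e : 2*(n+1)^2+(n+1) = (2*n^2+n)+(4*n+3) := by ring
      rw [e, pow_add ‖q‖ (2*n^2+n) (4*n+3)]
      ring
    have h43 : ‖q‖^(4*n+3) ≤ ‖q‖^n := pow_le_pow_of_le_one h0r hq.le (by omega)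
    rw [Real.norm_eq_abs, Real.norm_eq_abs, abs_of_nonneg (hun _), abs_of_nonneg (hun _), hue]
    have hle : 2/(1-‖q^2‖) * (1-‖q‖)⁻¹ * ‖q‖^(4*n+3)
        ≤ 2/(1-‖q^2‖) * (1-‖q‖)⁻¹ * ‖q‖^n := by
      apply mul_le_mul_of_nonneg_left h43
      positivity
    exact mul_le_mul_of_nonneg_right (by linarith) (hun n)
  have hsumu : Summable u :=
    summable_of_ratio_norm_eventually_le (by norm_num : (1:ℝ)/2 < 1) hev
  have hsumB : Summable B := by
    apply Summable.of_norm_bounded (g := fun p : ℕ × ℕ => ‖q‖^p.1 * u p.2)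
    · exact (summable_geometric_of_lt_one h0r hq).mul_of_nonneg hsumu
        (fun n => by positivity) hun
    · exact hBu
  have hfacq : ∀ j : ℕ, 1 - q*(q^2)^j ≠ 0 := hfac hq
  have hrow : ∀ N, ∑' n, B (N, n) = q^N / qPoch q (q^2) (N+1) := by
    intro N
    have hz : ∀ n ∉ Finset.range (N+1), B (N, n) = 0 := by
      intro n hn
      have hlt : N < n := by simp [Finset.mem_range] at hn; omega
      simp only [hB]
      rw [gb_eq_zero _ _ _ hlt]
      simp
    rw [tsum_eq_sum hz]
    have hff := fine_finite (q^2) N q hfacq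
    calc ∑ n ∈ Finset.range (N+1), B (N,n)
        = ∑ n ∈ Finset.range (N+1),
            q^N * (gb (q^2) N n * (q^2)^(n^2) * q^n / qPoch q (q^2) (n+1)) := by
          apply Finset.sum_congr rfl
          intro n _
          simp only [hB]
          rw [pow_add]
          ring
      _ = q^N * (1/ qPoch q (q^2) (N+1)) := by rw [← Finset.mul_sum, hff]
      _ = q^N / qPoch q (q^2) (N+1) := by ring
  have hcol : ∀ n, ∑' N, B (N, n) = q^(2*n^2+2*n) / (qPoch q (q^2) (n+1))^2 := by
    intro n
    have hinj : Function.Injective (fun m : ℕ => m + n) := by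
      intro a b hab
      dsimp only at hab
      omega
    have hsupp : Function.support (fun N => B (N, n)) ⊆ Set.range (fun m : ℕ => m + n) := by
      intro N hN
      by_contra hcon
      apply hN
      have hlt : N < n := by
        by_contra hge
        exact hcon ⟨N - n, by dsimp only; omega⟩
      simp only [hB]
      rw [gb_eq_zero _ _ _ hlt]
      simp
    rw [← hinj.tsum_eq hsupp]
    calc ∑' m, B (m+n, n)
        = ∑' m, ((q^2)^(n^2) * q^(2*n) / qPoch q (q^2) (n+1)) * (gb (q^2) (m+n) n * q^m) := by
          apply tsum_congr
          intro m
          simp only [hB]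
          rw [show m+n+n = m+(n+n) by omega, pow_add q m (n+n), pow_add q n n,
            show 2*n = n+n by omega, pow_add q n n]
          ring
      _ = ((q^2)^(n^2) * q^(2*n) / qPoch q (q^2) (n+1)) * ∑' m, gb (q^2) (m+n) n * q^m :=
          tsum_mul_left
      _ = ((q^2)^(n^2) * q^(2*n) / qPoch q (q^2) (n+1)) * (1 / qPoch q (q^2) (n+1)) := by
          rw [gb_tsum hq n]
      _ = q^(2*n^2+2*n) / (qPoch q (q^2) (n+1))^2 := by
          rw [← pow_mul, ← pow_add]
          ring
  calc (∑' n : ℕ, q ^ (2 * n ^ 2 + 2 * n) / (qPoch q (q ^ 2) (n + 1)) ^ 2)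
      = ∑' n : ℕ, ∑' N : ℕ, B (N, n) := tsum_congr fun n => (hcol n).symm
    _ = ∑' N : ℕ, ∑' n : ℕ, B (N, n) := Summable.tsum_comm (f := fun N n => B (N, n)) hsumB
    _ = ∑' n : ℕ, q ^ n / qPoch q (q ^ 2) (n + 1) := tsum_congr hrow
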